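/- arXiv:2006.11123 — 2 statements merged into one kernel-verified Lean document; each statement's English description precedes it below -/
import Mathlib

section
/- If T is a location measure (i.e., T(ax+b) = aT(x)+b for all a,b ∈ ℝ) that is additive on independent random variables (T(x+y) = T(x)+T(y)) and continuous at the standard normal distribution (z_n →_d N(0,1) implies T(z_n) → 0), then T(x) = E(x) for every random variable x with finite second moment. -/
open MeasureTheory ProbabilityTheory Filter

open Function Set
section helpers

lemma my_pi_eval_preimage {ι : Type} [Fintype ι] (μ : ι → Measure ℝ)
    [∀ i, IsProbabilityMeasure (μ i)] (i : ι) {s : Set ℝ} (hs : MeasurableSet s) :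
    Measure.pi μ (Function.eval i ⁻¹' s) = μ i s := by
  classical
  rw [Set.eval_preimage, Measure.pi_pi]
  rw [Finset.prod_eq_single i (fun j _ hj => by simp [Function.update_of_ne hj]) (by simp)]
  simp

lemma my_pi_map_eval {ι : Type} [Fintype ι] (μ : ι → Measure ℝ)
    [∀ i, IsProbabilityMeasure (μ i)] (i : ι) :
    (Measure.pi μ).map (Function.eval i) = μ i := by
  ext s hs
  rw [Measure.map_apply (measurable_pi_apply i) hs, my_pi_eval_preimage μ i hs]

lemma my_iIndepFun_eval {ι : Type} [Fintype ι] (μ : ι → Measure ℝ)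
    [∀ i, IsProbabilityMeasure (μ i)] :
    iIndepFun
      (fun i : ι => (Function.eval i : (ι → ℝ) → ℝ)) (Measure.pi μ) := by
  classical
  rw [iIndepFun_iff_measure_inter_preimage_eq_mul]
  intro S sets hsets
  have h1 : (⋂ i ∈ S, Function.eval i ⁻¹' sets i)
      = Set.pi Set.univ (fun j => if j ∈ S then sets j else Set.univ) := by
    ext ω
    simp only [Set.mem_iInter, Set.mem_preimage, Set.mem_pi, Set.mem_univ, true_imp_iff]
    constructor
    · intro h j
      by_cases hj : j ∈ S <;> simp [hj, h j]
    · intro h j hj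
      have := h j
      simpa [hj] using this
  rw [h1, Measure.pi_pi]
  have h2 : ∀ j, μ j (if j ∈ S then sets j else Set.univ)
      = (if j ∈ S then μ j (sets j) else 1) := by
    intro j; by_cases hj : j ∈ S <;> simp [hj]
  simp_rw [h2]
  rw [Finset.prod_ite_mem Finset.univ S (fun j => μ j (sets j)), Finset.univ_inter]
  exact Finset.prod_congr rfl fun i hi => (my_pi_eval_preimage μ i (hsets i hi)).symm

lemma my_indepFun_fst_snd (μ ν : Measure ℝ) [IsProbabilityMeasure μ]
    [IsProbabilityMeasure ν] :
    IndepFun (Prod.fst : ℝ × ℝ → ℝ) (Prod.snd : ℝ × ℝ → ℝ) (μ.prod ν) := by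
  rw [indepFun_iff_measure_inter_preimage_eq_mul]
  intro s t hs ht
  have h1 : (Prod.fst ⁻¹' s ∩ Prod.snd ⁻¹' t : Set (ℝ × ℝ)) = s ×ˢ t := (Set.prod_eq s t).symm
  have h2 : (Prod.fst ⁻¹' s : Set (ℝ × ℝ)) = s ×ˢ Set.univ := by ext p; simp
  have h3 : (Prod.snd ⁻¹' t : Set (ℝ × ℝ)) = Set.univ ×ˢ t := by ext p; simp
  rw [h1, h2, h3, Measure.prod_prod, Measure.prod_prod, Measure.prod_prod]
  simp [mul_comm]

end helpers

variable {T : ProbabilityMeasure ℝ → ℝ}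

lemma my_affine
    (hloc : ∀ (μ : ProbabilityMeasure ℝ) (a b : ℝ),
      T (μ.map ((measurable_id.const_mul a).add_const b).aemeasurable) = a * T μ + b)
    (ν : Measure ℝ) (hν : IsProbabilityMeasure ν) (a b : ℝ)
    (h : IsProbabilityMeasure (ν.map (fun x => a * x + b))) :
    T ⟨ν.map (fun x => a * x + b), h⟩ = a * T ⟨ν, hν⟩ + b :=
  hloc ⟨ν, hν⟩ a b

lemma my_dirac
    (hloc : ∀ (μ : ProbabilityMeasure ℝ) (a b : ℝ),
      T (μ.map ((measurable_id.const_mul a).add_const b).aemeasurable) = a * T μ + b)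
    (c : ℝ) (h : IsProbabilityMeasure (Measure.dirac c : Measure ℝ)) :
    T ⟨Measure.dirac c, h⟩ = c := by
  have h0 : ((gaussianReal 0 1 : Measure ℝ).map (fun x => (0:ℝ) * x + c)) = Measure.dirac c := by
    have : (fun x : ℝ => (0:ℝ) * x + c) = fun _ => c := by funext x; ring
    rw [this, Measure.map_const]
    simp
  have := my_affine hloc (gaussianReal 0 1) inferInstance 0 c (h0 ▸ h)
  rw [zero_mul, zero_add] at this
  exact (congrArg T (Subtype.ext h0.symm)).trans this

lemma my_T_sum
    (hloc : ∀ (μ : ProbabilityMeasure ℝ) (a b : ℝ),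
      T (μ.map ((measurable_id.const_mul a).add_const b).aemeasurable) = a * T μ + b)
    (hadd : ∀ (Ω : Type) (_ : MeasurableSpace Ω) (P : Measure Ω)
      (_ : IsProbabilityMeasure P) (x y : Ω → ℝ)
      (hx : Measurable x) (hy : Measurable y), IndepFun x y P →
      T ⟨P.map (x + y), Measure.isProbabilityMeasure_map (hx.add hy).aemeasurable⟩ =
        T ⟨P.map x, Measure.isProbabilityMeasure_map hx.aemeasurable⟩ +
        T ⟨P.map y, Measure.isProbabilityMeasure_map hy.aemeasurable⟩)
    (μ : ProbabilityMeasure ℝ)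
    {Ω : Type} [mΩ : MeasurableSpace Ω] (P : Measure Ω) [hP : IsProbabilityMeasure P]
    {ι : Type} [DecidableEq ι] {X : ι → Ω → ℝ} (hX : ∀ i, Measurable (X i))
    (hind : iIndepFun X P)
    (s : Finset ι) (hlaw : ∀ i ∈ s, P.map (X i) = (μ : Measure ℝ)) :
    T ⟨P.map (fun ω => ∑ i ∈ s, X i ω),
        Measure.isProbabilityMeasure_map (s.measurable_sum (fun i _ => hX i)).aemeasurable⟩
      = s.card * T μ := by
  induction s using Finset.cons_induction with
  | empty =>
    have h0 : (fun ω : Ω => ∑ i ∈ (∅ : Finset ι), X i ω) = fun _ => (0:ℝ) := by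
      funext ω; simp
    have h1 : P.map (fun ω : Ω => ∑ i ∈ (∅ : Finset ι), X i ω) = Measure.dirac (0:ℝ) := by
      rw [h0, Measure.map_const]; simp
    calc T ⟨P.map (fun ω : Ω => ∑ i ∈ (∅ : Finset ι), X i ω), _⟩
        = T ⟨Measure.dirac (0:ℝ), inferInstance⟩ := congrArg T (Subtype.ext h1)
      _ = 0 := my_dirac hloc 0 _
      _ = ((∅ : Finset ι).card : ℝ) * T μ := by simp
  | cons a s ha ih =>
    have hx : Measurable fun ω => ∑ i ∈ s, X i ω := s.measurable_sum (fun i _ => hX i)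
    have e2 : (∑ i ∈ s, X i) = fun ω => ∑ i ∈ s, X i ω := by
      funext ω; exact Finset.sum_apply ω s X
    have hindep : IndepFun (fun ω => ∑ i ∈ s, X i ω) (X a) P := by
      have := hind.indepFun_finset_sum_of_notMem hX ha
      rwa [e2] at this
    have e1 : P.map (fun ω => ∑ i ∈ Finset.cons a s ha, X i ω)
        = P.map ((fun ω => ∑ i ∈ s, X i ω) + X a) := by
      congr 1
      funext ω
      rw [Finset.sum_cons]
      exact add_comm _ _
    have key := hadd Ω mΩ P hP (fun ω => ∑ i ∈ s, X i ω) (X a) hx (hX a) hindep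
    have hXa : T ⟨P.map (X a), Measure.isProbabilityMeasure_map (hX a).aemeasurable⟩ = T μ :=
      congrArg T (Subtype.ext (hlaw a (Finset.mem_cons_self a s)))
    calc T ⟨P.map (fun ω => ∑ i ∈ Finset.cons a s ha, X i ω), _⟩
        = T ⟨P.map ((fun ω => ∑ i ∈ s, X i ω) + X a),
            Measure.isProbabilityMeasure_map (hx.add (hX a)).aemeasurable⟩ := by
          exact congrArg T (Subtype.ext e1)
      _ = T ⟨P.map (fun ω => ∑ i ∈ s, X i ω), Measure.isProbabilityMeasure_map hx.aemeasurable⟩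
            + T ⟨P.map (X a), Measure.isProbabilityMeasure_map (hX a).aemeasurable⟩ := key
      _ = s.card * T μ + T μ := by
          rw [ih (fun i hi => hlaw i (Finset.mem_cons_of_mem hi)), hXa]
      _ = (Finset.cons a s ha).card * T μ := by
          rw [Finset.card_cons]; push_cast; ring

lemma my_conv_integral (ν : ℕ → Measure ℝ) [∀ n, IsProbabilityMeasure (ν n)]
    (hsmall : ∀ δ : ℝ, 0 < δ →
      Tendsto (fun n => ((ν n) {y | δ ≤ |y|}).toReal) atTop (nhds 0))
    (f : BoundedContinuousFunction ℝ ℝ) :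
    Tendsto (fun n => ∫ x, f x ∂(((ν n).prod (gaussianReal 0 1)).map
      (fun p : ℝ × ℝ => p.1 + p.2))) atTop (nhds (∫ x, f x ∂(gaussianReal 0 1))) := by
  set γ : Measure ℝ := gaussianReal 0 1 with hγ
  set C : ℝ := ‖f‖ with hC
  have hC0 : 0 ≤ C := norm_nonneg f
  set F : ℝ → ℝ := fun y => ∫ x, f (y + x) ∂γ with hF
  have hFcont : Continuous F := by
    refine continuous_of_dominated
      (fun y => (f.continuous.comp (continuous_const.add continuous_id)).aestronglyMeasurable)
      (fun y => Eventually.of_forall fun x => f.norm_coe_le_norm _)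
      (integrable_const C)
      (Eventually.of_forall fun x => ?_)
    exact f.continuous.comp (continuous_id.add continuous_const)
  have hFbound : ∀ y, |F y| ≤ C := by
    intro y
    calc |F y| ≤ ∫ x, C ∂γ := by
          rw [← Real.norm_eq_abs]
          exact norm_integral_le_of_norm_le (integrable_const C)
            (Eventually.of_forall fun x => f.norm_coe_le_norm _)
      _ = C := by simp
  set L : ℝ := ∫ x, f x ∂γ with hL
  have hF0 : F 0 = L := by simp [hF, hL]
  have hLbound : |L| ≤ C := by rw [← hF0]; exact hFbound 0
  -- rewrite the integral
  have hrw : ∀ n, ∫ x, f x ∂(((ν n).prod γ).map (fun p : ℝ × ℝ => p.1 + p.2))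
      = ∫ y, F y ∂(ν n) := by
    intro n
    rw [integral_map (φ := fun p : ℝ × ℝ => p.1 + p.2) (measurable_fst.add measurable_snd).aemeasurable
      f.continuous.aestronglyMeasurable]
    have hint : Integrable (fun p : ℝ × ℝ => f (p.1 + p.2)) ((ν n).prod γ) := by
      have : Integrable (fun _ : ℝ × ℝ => C) ((ν n).prod γ) := integrable_const C
      refine this.mono' ?_ (Eventually.of_forall fun p => f.norm_coe_le_norm _)
      exact (f.continuous.comp (continuous_fst.add continuous_snd)).aestronglyMeasurable
    rw [integral_prod _ hint]
  simp_rw [hrw]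
  -- epsilon argument
  rw [Metric.tendsto_atTop]
  intro ε hε
  have hδ : ∃ δ > 0, ∀ y : ℝ, |y| < δ → |F y - L| < ε / 3 := by
    have := Metric.continuous_iff.mp hFcont 0 (ε / 3) (by positivity)
    obtain ⟨δ, hδ0, hδ⟩ := this
    exact ⟨δ, hδ0, fun y hy => by
      have := hδ y (by simpa [Real.dist_eq] using hy)
      simpa [Real.dist_eq, hF0] using this⟩
  obtain ⟨δ, hδ0, hδ⟩ := hδ
  have hN := (hsmall δ hδ0).eventually (gt_mem_nhds
    (show (0:ℝ) < ε / (3 * (2 * C + 1)) by positivity))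
  rw [eventually_atTop] at hN
  obtain ⟨N, hN⟩ := hN
  refine ⟨N, fun n hn => ?_⟩
  have hSmeas : MeasurableSet {y : ℝ | δ ≤ |y|} :=
    measurableSet_le measurable_const continuous_abs.measurable
  set S : Set ℝ := {y : ℝ | δ ≤ |y|} with hS
  have hFint : Integrable F (ν n) := by
    refine (integrable_const C).mono' hFcont.aestronglyMeasurable
      (Eventually.of_forall fun y => ?_)
    simpa [Real.norm_eq_abs] using hFbound y
  have key : |∫ y, F y ∂(ν n) - L| ≤ ε / 3 + 2 * C * ((ν n) S).toReal := by
    have h1 : ∫ y, F y ∂(ν n) - L = ∫ y, (F y - L) ∂(ν n) := by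
      rw [integral_sub hFint (integrable_const L)]
      simp
    rw [h1]
    have h2 : |∫ y, (F y - L) ∂(ν n)| ≤ ∫ y, |F y - L| ∂(ν n) := by
      rw [← Real.norm_eq_abs]
      exact (norm_integral_le_integral_norm _)
    refine h2.trans ?_
    have h3 : ∫ y, |F y - L| ∂(ν n)
        ≤ ∫ y, (ε / 3 + S.indicator (fun _ => 2 * C) y) ∂(ν n) := by
      refine integral_mono ?_ ?_ ?_
      · refine (integrable_const (2 * C)).mono'
          (hFcont.sub continuous_const).abs.aestronglyMeasurable
          (Eventually.of_forall fun y => ?_)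
        rw [Real.norm_eq_abs, abs_abs]
        calc |F y - L| ≤ |F y| + |L| := abs_sub _ _
          _ ≤ C + C := add_le_add (hFbound y) hLbound
          _ = 2 * C := by ring
      · exact (integrable_const _).add ((integrable_const (2*C)).indicator hSmeas)
      · intro y
        by_cases hy : y ∈ S
        · calc |F y - L| ≤ |F y| + |L| := abs_sub _ _
            _ ≤ 2 * C := by linarith [hFbound y, hLbound]
            _ ≤ ε / 3 + S.indicator (fun _ => 2 * C) y := by
                rw [Set.indicator_of_mem hy]; linarith
        · have : |y| < δ := by simpa [hS, not_le] using hy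
          calc |F y - L| ≤ ε / 3 := (hδ y this).le
            _ ≤ ε / 3 + S.indicator (fun _ => 2 * C) y := by
                rw [Set.indicator_of_notMem hy]; simp
    refine h3.trans ?_
    rw [integral_add (integrable_const _) ((integrable_const (2*C)).indicator hSmeas),
      integral_const, integral_indicator_const _ hSmeas]
    simp [measure_univ, smul_eq_mul]
    ring_nf
    exact le_of_eq (by simp only [Measure.real]; ring)
  have hsmall_n : ((ν n) S).toReal < ε / (3 * (2 * C + 1)) := hN n hn
  rw [Real.dist_eq]
  have h2C : 2 * C * ((ν n) S).toReal < ε / 3 * 2 := by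
    have h1 : 2 * C * ((ν n) S).toReal ≤ (2 * C + 1) * ((ν n) S).toReal := by
      have := ENNReal.toReal_nonneg (a := (ν n) S)
      nlinarith
    have h2 : (2 * C + 1) * ((ν n) S).toReal < (2 * C + 1) * (ε / (3 * (2 * C + 1))) := by
      apply mul_lt_mul_of_pos_left hsmall_n (by positivity)
    have h3 : (2 * C + 1) * (ε / (3 * (2 * C + 1))) = ε / 3 := by
      field_simp
    linarith
  linarith [key]

/-- If a location measure (affine equivariant functional on probability distributions on ℝ)
is additive on independent random variables and continuous at `N(0,1)`, then it equals
the mean on every distribution with finite second moment. -/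
theorem location_measure_is_mean
    (T : ProbabilityMeasure ℝ → ℝ)
    (hloc : ∀ (μ : ProbabilityMeasure ℝ) (a b : ℝ),
      T (μ.map ((measurable_id.const_mul a).add_const b).aemeasurable) = a * T μ + b)
    (hadd : ∀ (Ω : Type) (_ : MeasurableSpace Ω) (P : Measure Ω)
      (_ : IsProbabilityMeasure P) (x y : Ω → ℝ)
      (hx : Measurable x) (hy : Measurable y), IndepFun x y P →
      T ⟨P.map (x + y), Measure.isProbabilityMeasure_map (hx.add hy).aemeasurable⟩ =
        T ⟨P.map x, Measure.isProbabilityMeasure_map hx.aemeasurable⟩ +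
        T ⟨P.map y, Measure.isProbabilityMeasure_map hy.aemeasurable⟩)
    (hcont : ∀ μs : ℕ → ProbabilityMeasure ℝ,
      Tendsto μs atTop (nhds ⟨gaussianReal 0 1, inferInstance⟩) →
      Tendsto (fun n => T (μs n)) atTop (nhds 0)) :
    ∀ μ : ProbabilityMeasure ℝ, MemLp id 2 (μ : Measure ℝ) →
      T μ = ∫ x, x ∂(μ : Measure ℝ) := by
  intro μ hμ2
  set γ : Measure ℝ := gaussianReal 0 1 with hγdef
  set m : ℝ := ∫ x, x ∂(μ : Measure ℝ) with hmdef
  set v : ℝ := variance id (μ : Measure ℝ) with hvdef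
  have hv0 : 0 ≤ v := variance_nonneg _ _
  -- T of the standard gaussian is 0
  have hTγ : T ⟨γ, inferInstance⟩ = 0 :=
    tendsto_nhds_unique tendsto_const_nhds
      (hcont (fun _ : ℕ => ⟨γ, inferInstance⟩) tendsto_const_nhds)
  -- the iid setup
  set P : ∀ n : ℕ, Measure (Fin n → ℝ) :=
    fun n => Measure.pi (fun _ : Fin n => (μ : Measure ℝ)) with hPdef
  set Sn : ∀ n : ℕ, (Fin n → ℝ) → ℝ :=
    fun n ω => ∑ i ∈ Finset.univ, Function.eval i ω with hSndef
  have hSnmeas : ∀ n, Measurable (Sn n) :=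
    fun n => Finset.measurable_sum _ (fun i _ => measurable_pi_apply i)
  have hlawEval : ∀ n (i : Fin n), (P n).map (Function.eval i) = (μ : Measure ℝ) :=
    fun n i => my_pi_map_eval _ i
  have hMemEval : ∀ n (i : Fin n), MemLp (Function.eval i) 2 (P n) := by
    intro n i
    have h1 : MemLp id 2 ((P n).map (Function.eval i)) := by rw [hlawEval n i]; exact hμ2
    have h2 := (memLp_map_measure_iff (μ := P n) (f := Function.eval i) (g := id) (p := 2)
      aestronglyMeasurable_id (measurable_pi_apply i).aemeasurable).mp h1
    simpa using h2
  have hMemSn : ∀ n, MemLp (Sn n) 2 (P n) := by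
    intro n
    exact memLp_finset_sum _ (fun i _ => hMemEval n i)
  have hEeval : ∀ n (i : Fin n), ∫ ω, Function.eval i ω ∂(P n) = m := by
    intro n i
    have h1 : ∫ y, id y ∂((P n).map (Function.eval i))
        = ∫ ω, id (Function.eval i ω) ∂(P n) :=
      integral_map (measurable_pi_apply i).aemeasurable aestronglyMeasurable_id
    simpa [hlawEval n i] using h1.symm
  have hESn : ∀ n, ∫ ω, Sn n ω ∂(P n) = n * m := by
    intro n
    rw [hSndef]
    rw [integral_finset_sum _ (fun i _ => (hMemEval n i).integrable one_le_two)]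
    simp [hEeval n]
  have hVarEval : ∀ n (i : Fin n), variance (Function.eval i) (P n) = v := by
    intro n i
    refine IdentDistrib.variance_eq ⟨(measurable_pi_apply i).aemeasurable, aemeasurable_id, ?_⟩
    rw [hlawEval n i, Measure.map_id]
  have hVarSn : ∀ n, variance (Sn n) (P n) = n * v := by
    intro n
    have e2 : (∑ i : Fin n, (Function.eval i : (Fin n → ℝ) → ℝ)) = Sn n := by
      funext ω; exact Finset.sum_apply ω Finset.univ _
    have h1 := IndepFun.variance_sum (μ := P n)
      (X := fun i : Fin n => Function.eval i) (s := Finset.univ)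
      (fun i _ => hMemEval n i)
      (fun i _ j _ hij => (my_iIndepFun_eval (fun _ : Fin n => (μ : Measure ℝ))).indepFun hij)
    rw [e2] at h1
    rw [h1]
    simp [hVarEval n, mul_comm]
  -- T of the law of Sn
  have hTSn : ∀ n, T ⟨(P n).map (Sn n),
      Measure.isProbabilityMeasure_map (hSnmeas n).aemeasurable⟩ = n * T μ := by
    intro n
    have h1 := my_T_sum hloc hadd μ (P n)
      (X := fun i : Fin n => Function.eval i)
      (fun i => measurable_pi_apply i)
      (my_iIndepFun_eval (fun _ : Fin n => (μ : Measure ℝ)))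
      Finset.univ (fun i _ => hlawEval n i)
    rw [Finset.card_univ, Fintype.card_fin] at h1
    exact h1
  -- the recentered-rescaled laws
  set g : ℕ → ℝ → ℝ := fun n x => (1 / (n : ℝ)) * x + (-m) with hgdef
  have hgmeas : ∀ n, Measurable (g n) := fun n => (measurable_id.const_mul _).add_const _
  set ν : ℕ → Measure ℝ := fun n => ((P n).map (Sn n)).map (g n) with hνdef
  have hνprob : ∀ n, IsProbabilityMeasure (ν n) := by
    intro n
    have : IsProbabilityMeasure ((P n).map (Sn n)) :=
      Measure.isProbabilityMeasure_map (hSnmeas n).aemeasurable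
    exact Measure.isProbabilityMeasure_map (hgmeas n).aemeasurable
  have hTν : ∀ n : ℕ, 1 ≤ n → T ⟨ν n, hνprob n⟩ = T μ - m := by
    intro n hn
    have h1 := my_affine hloc ((P n).map (Sn n))
      (Measure.isProbabilityMeasure_map (hSnmeas n).aemeasurable) (1 / (n : ℝ)) (-m) (hνprob n)
    rw [hTSn n] at h1
    rw [h1]
    have hn' : (n : ℝ) ≠ 0 := by positivity
    field_simp
    ring
  -- Chebyshev control
  have hsmall : ∀ δ : ℝ, 0 < δ →
      Tendsto (fun n => ((ν n) {y | δ ≤ |y|}).toReal) atTop (nhds 0) := by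
    intro δ hδ
    have hbound : ∀ n : ℕ, 1 ≤ n →
        ((ν n) {y | δ ≤ |y|}).toReal ≤ v / δ ^ 2 * (1 / (n : ℝ)) := by
      intro n hn
      have hn' : (n : ℝ) ≠ 0 := by positivity
      set Z : (Fin n → ℝ) → ℝ := fun ω => (1 / (n : ℝ)) * Sn n ω with hZdef
      have hZmem : MemLp Z 2 (P n) := (hMemSn n).const_mul _
      have hEZ : ∫ ω, Z ω ∂(P n) = m := by
        rw [hZdef]
        simp only
        rw [integral_const_mul, hESn n]
        field_simp
      have hset : (ν n) {y | δ ≤ |y|} = (P n) {ω | δ ≤ |Z ω - ∫ ω', Z ω' ∂(P n)|} := by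
        rw [hνdef]
        simp only
        rw [Measure.map_apply (hgmeas n)
          (measurableSet_le measurable_const continuous_abs.measurable),
          Measure.map_apply (hSnmeas n)
          ((hgmeas n) (measurableSet_le measurable_const continuous_abs.measurable))]
        congr 1
        ext ω
        rw [hEZ]
        simp [hgdef, hZdef, sub_eq_add_neg]
      have hcheb := meas_ge_le_variance_div_sq (μ := P n) hZmem hδ
      have hvarZ : variance Z (P n) = v / δ ^ 2 * (1 / (n : ℝ)) * δ ^ 2 := by
        rw [hZdef]
        rw [variance_const_mul, hVarSn n]
        field_simp
      rw [hset]
      calc ((P n) {ω | δ ≤ |Z ω - ∫ ω', Z ω' ∂(P n)|}).toReal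
          ≤ (ENNReal.ofReal (variance Z (P n) / δ ^ 2)).toReal := by
            apply ENNReal.toReal_mono ENNReal.ofReal_ne_top hcheb
        _ = variance Z (P n) / δ ^ 2 := by
            rw [ENNReal.toReal_ofReal]
            exact div_nonneg (variance_nonneg _ _) (by positivity)
        _ = v / δ ^ 2 * (1 / (n : ℝ)) := by rw [hvarZ]; field_simp
    have htend : Tendsto (fun n : ℕ => v / δ ^ 2 * (1 / (n : ℝ))) atTop (nhds 0) := by
      have := tendsto_one_div_atTop_nhds_zero_nat.const_mul (v / δ ^ 2)
      simpa using this
    refine squeeze_zero' (Eventually.of_forall fun n => ENNReal.toReal_nonneg) ?_ htend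
    filter_upwards [eventually_ge_atTop 1] with n hn
    exact hbound n hn
  -- the laws of g + shifted means, converging to the gaussian
  have haddmeas : Measurable (fun p : ℝ × ℝ => p.1 + p.2) :=
    measurable_fst.add measurable_snd
  set lawY : ℕ → ProbabilityMeasure ℝ := fun n =>
    ⟨((ν n).prod γ).map (fun p : ℝ × ℝ => p.1 + p.2),
      Measure.isProbabilityMeasure_map haddmeas.aemeasurable⟩ with hlawYdef
  have hconv : Tendsto lawY atTop (nhds ⟨γ, inferInstance⟩) := by
    refine ProbabilityMeasure.tendsto_iff_forall_integral_tendsto.mpr ?_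
    intro f
    exact my_conv_integral ν hsmall f
  have hTlawY : ∀ n : ℕ, 1 ≤ n → T (lawY n) = T μ - m := by
    intro n hn
    have hfs : ((ν n).prod γ).map Prod.fst = ν n := by
      rw [Measure.map_fst_prod]; simp
    have hss : ((ν n).prod γ).map Prod.snd = γ := by
      rw [Measure.map_snd_prod]; simp
    have key := hadd (ℝ × ℝ) inferInstance ((ν n).prod γ) inferInstance
      Prod.fst Prod.snd measurable_fst measurable_snd (my_indepFun_fst_snd (ν n) γ)
    have e1 : T (lawY n) = T ⟨((ν n).prod γ).map (Prod.fst + Prod.snd),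
        Measure.isProbabilityMeasure_map (measurable_fst.add measurable_snd).aemeasurable⟩ :=
      congrArg T (Subtype.ext rfl)
    rw [e1, key]
    have e2 : T ⟨((ν n).prod γ).map Prod.fst,
        Measure.isProbabilityMeasure_map measurable_fst.aemeasurable⟩ = T μ - m := by
      rw [(congrArg T (Subtype.ext hfs) : _ = T ⟨ν n, hνprob n⟩)]
      exact hTν n hn
    have e3 : T ⟨((ν n).prod γ).map Prod.snd,
        Measure.isProbabilityMeasure_map measurable_snd.aemeasurable⟩ = 0 := by
      rw [(congrArg T (Subtype.ext hss) : _ = T ⟨γ, inferInstance⟩)]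
      exact hTγ
    rw [e2, e3, add_zero]
  -- conclude
  have hfinal : Tendsto (fun n => T (lawY n)) atTop (nhds 0) := hcont lawY hconv
  have hconst : Tendsto (fun _ : ℕ => T μ - m) atTop (nhds 0) := by
    refine hfinal.congr' ?_
    filter_upwards [eventually_ge_atTop 1] with n hn
    exact (hTlawY n hn)
  have : T μ - m = 0 := tendsto_nhds_unique tendsto_const_nhds hconst
  linarith
end

section
/- Let z = (z_1,…,z_p)' have independent standardized components and let D be a superadditive squared dispersion measure (D(x+y) ≥ D(x)+D(y) for independent x,y, and D(ax+b) = a²D(x)). Then for every unit vector u ∈ ℝ^p, D(u'z) ≥ min_j D(z_j). -/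
open MeasureTheory ProbabilityTheory Finset

/-- If `z = (z₁,…,z_p)` has independent standardized components (mean 0, variance 1) and
`D` is a superadditive squared dispersion measure (`D(ax+b) = a²D(x)` and
`D(x+y) ≥ D(x)+D(y)` for independent `x, y`), then for every unit vector `u`,
`D(u'z) ≥ min_j D(z_j)`. -/
theorem superadditive_dispersion_projection_bound
    {p : ℕ} [NeZero p] {Ω : Type} [MeasurableSpace Ω]
    (P : Measure Ω) [IsProbabilityMeasure P]
    (z : Fin p → Ω → ℝ)
    (hmeas : ∀ i, Measurable (z i))
    (hindep : iIndepFun z P)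
    (hmean : ∀ i, ∫ ω, z i ω ∂P = 0)
    (hvar : ∀ i, ∫ ω, (z i ω) ^ 2 ∂P = 1)
    (D : (Ω → ℝ) → ℝ)
    (hDaff : ∀ (x : Ω → ℝ) (a b : ℝ), D (fun ω => a * x ω + b) = a ^ 2 * D x)
    (hDsuper : ∀ x y : Ω → ℝ, Measurable x → Measurable y → IndepFun x y P →
      D x + D y ≤ D (fun ω => x ω + y ω))
    (u : Fin p → ℝ) (hu : ∑ i, (u i) ^ 2 = 1) :
    univ.inf' univ_nonempty (fun j => D (z j)) ≤ D (fun ω => ∑ i, u i * z i ω) := by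
  classical
  set w : Fin p → Ω → ℝ := fun i ω => u i * z i ω with hw
  have hwmeas : ∀ i, Measurable (w i) := fun i => (hmeas i).const_mul (u i)
  have hwindep : iIndepFun w P :=
    hindep.comp (fun i x => u i * x) (fun i => measurable_const_mul (u i))
  have hDw : ∀ i, D (w i) = (u i) ^ 2 * D (z i) := by
    intro i
    have : w i = fun ω => u i * z i ω + 0 := by funext ω; simp [hw]
    rw [this, hDaff]
  have hD0 : D (fun _ => (0 : ℝ)) = 0 := by
    have j : Fin p := ⟨0, Nat.pos_of_ne_zero NeZero.out⟩
    have : (fun _ : Ω => (0 : ℝ)) = fun ω => (0 : ℝ) * z j ω + 0 := by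
      funext ω; simp
    rw [this, hDaff]; ring
  -- main induction: superadditivity over finsets
  have key : ∀ s : Finset (Fin p),
      ∑ i ∈ s, D (w i) ≤ D (fun ω => ∑ i ∈ s, w i ω) := by
    intro s
    induction s using Finset.induction with
    | empty => simp [hD0]
    | @insert a s ha ih =>
      have hsum_meas : Measurable (fun ω => ∑ i ∈ s, w i ω) := by
        exact Finset.measurable_sum s (fun i _ => hwmeas i)
      have hind : IndepFun (w a) (fun ω => ∑ i ∈ s, w i ω) P := by
        have := hwindep.indepFun_finsetSum_of_notMem hwmeas ha
        have h2 : (∑ i ∈ s, w i) = fun ω => ∑ i ∈ s, w i ω := by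
          funext ω; simp
        rw [h2] at this
        exact this.symm
      calc ∑ i ∈ insert a s, D (w i) = D (w a) + ∑ i ∈ s, D (w i) := by
            rw [Finset.sum_insert ha]
        _ ≤ D (w a) + D (fun ω => ∑ i ∈ s, w i ω) := by linarith
        _ ≤ D (fun ω => w a ω + ∑ i ∈ s, w i ω) :=
            hDsuper _ _ (hwmeas a) hsum_meas hind
        _ = D (fun ω => ∑ i ∈ insert a s, w i ω) := by
            congr 1; funext ω; rw [Finset.sum_insert ha]
  have h1 := key Finset.univ
  set m := univ.inf' univ_nonempty (fun j => D (z j)) with hm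
  have h2 : m ≤ ∑ i, D (w i) := by
    calc m = ∑ i, (u i) ^ 2 * m := by
          rw [← Finset.sum_mul, hu, one_mul]
      _ ≤ ∑ i, D (w i) := by
          apply Finset.sum_le_sum
          intro i _
          rw [hDw]
          exact mul_le_mul_of_nonneg_left (Finset.inf'_le _ (mem_univ i)) (sq_nonneg _)
  exact h2.trans h1
end
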